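/- arXiv:2401.08532 — 4 statements merged into one kernel-verified Lean document; each statement's English description precedes it below -/
import Mathlib

section
/- Let ν : F* → Γ be a valuation on a field F. Then the assignment (a₁,…,a_d) ↦ ν(a₁) ∧ … ∧ ν(a_d) defines a well-defined homomorphism of graded rings from the Milnor K-theory ring K(F) to the exterior algebra ⋀Γ. -/
open ExteriorAlgebra

/-- The Steinberg relation on the tensor algebra of `Fˣ` (written additively):
`{a} ⬝ {b} = 0` whenever `a + b = 1` in `F`. Milnor K-theory `K(F)` is the quotient of
the tensor algebra of `Additive Fˣ` by this relation. -/
inductive MilnorRel (F : Type*) [Field F] :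
    TensorAlgebra ℤ (Additive Fˣ) → TensorAlgebra ℤ (Additive Fˣ) → Prop
  | steinberg (a b : Fˣ) (h : (a : F) + (b : F) = 1) :
      MilnorRel F
        (TensorAlgebra.ι ℤ (Additive.ofMul a) * TensorAlgebra.ι ℤ (Additive.ofMul b)) 0

/-- Milnor K-theory of a field `F`, as a ring. -/
def MilnorK (F : Type*) [Field F] : Type _ := RingQuot (MilnorRel F)

noncomputable instance (F : Type*) [Field F] : Ring (MilnorK F) :=
  inferInstanceAs (Ring (RingQuot (MilnorRel F)))

/-- The symbol `{a} ∈ K₁(F)` for `a ∈ Fˣ`. -/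
noncomputable def MilnorK.symbol {F : Type*} [Field F] (a : Fˣ) : MilnorK F :=
  RingQuot.mkRingHom (MilnorRel F) (TensorAlgebra.ι ℤ (Additive.ofMul a))

/-- Let `ν : Fˣ → Γ` be a valuation on a field `F`. Then
`(a₁,…,a_d) ↦ ν(a₁) ∧ … ∧ ν(a_d)` defines a well-defined ring homomorphism from the
Milnor K-theory ring `K(F)` to the exterior algebra `⋀Γ`; equivalently, there is a ring
homomorphism `K(F) →+* ⋀Γ` sending each symbol `{a}` to `ι (ν a)` (it then automatically
sends products of symbols to wedges and is graded). -/
theorem stmt_2 {F Γ : Type*} [Field F] [AddCommGroup Γ] [LinearOrder Γ] [IsOrderedAddMonoid Γ]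
    (ν : Fˣ → Γ)
    (hmul : ∀ x y : Fˣ, ν (x * y) = ν x + ν y)
    (hadd : ∀ x y z : Fˣ, (x : F) + (y : F) = (z : F) → min (ν x) (ν y) ≤ ν z) :
    ∃ φ : MilnorK F →+* ExteriorAlgebra ℤ Γ,
      ∀ a : Fˣ, φ (MilnorK.symbol a) = ExteriorAlgebra.ι ℤ (ν a) := by
  classical
  have hν1 : ν 1 = 0 := by
    have h := hmul 1 1
    rw [mul_one] at h
    exact (left_eq_add.mp h)
  have hνneg : ∀ x : Fˣ, ν (-x) = ν x := by
    intro x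
    have h1 : ν (-1 : Fˣ) = 0 := by
      have h := hmul (-1) (-1)
      rw [neg_mul_neg, one_mul, hν1] at h
      rcases lt_trichotomy (ν (-1 : Fˣ)) 0 with h' | h' | h'
      · exact absurd h.symm (ne_of_lt (add_neg h' h'))
      · exact h'
      · exact absurd h.symm (ne_of_gt (add_pos h' h'))
    rw [show (-x : Fˣ) = -1 * x from (neg_one_mul x).symm, hmul, h1, zero_add]
  let νhom : Additive Fˣ →+ Γ :=
    { toFun := fun a => ν (Additive.toMul a)
      map_zero' := hν1
      map_add' := fun a b => hmul _ _ }
  let f : TensorAlgebra ℤ (Additive Fˣ) →ₐ[ℤ] ExteriorAlgebra ℤ Γ :=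
    TensorAlgebra.lift ℤ ((ExteriorAlgebra.ι ℤ).comp νhom.toIntLinearMap)
  have hf : ∀ a : Fˣ, f (TensorAlgebra.ι ℤ (Additive.ofMul a)) = ExteriorAlgebra.ι ℤ (ν a) := by
    intro a
    simp [f, TensorAlgebra.lift_ι_apply]
    rfl
  have hrel : ∀ x y, MilnorRel F x y → f.toRingHom x = f.toRingHom y := by
    rintro x y ⟨a, b, h⟩
    simp only [AlgHom.toRingHom_eq_coe, RingHom.coe_coe, map_mul, map_zero, hf]
    have hab : min (ν a) (ν b) ≤ 0 := by
      have := hadd a b 1 (by rw [Units.val_one]; exact h)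
      rwa [hν1] at this
    have h1 : min 0 (ν b) ≤ ν a := by
      have := hadd 1 (-b) a (by push_cast; rw [← h]; ring)
      rwa [hν1, hνneg] at this
    have h2 : min 0 (ν a) ≤ ν b := by
      have := hadd 1 (-a) b (by push_cast; rw [← h]; ring)
      rwa [hν1, hνneg] at this
    rcases lt_trichotomy (ν b) 0 with hb | hb | hb
    · -- ν b < 0 ⟹ ν a = ν b
      have hba : ν b ≤ ν a := by rwa [min_eq_right hb.le] at h1
      have hab' : ν a ≤ ν b := by
        rcases le_total 0 (ν a) with h0 | h0
        · rw [min_eq_left h0] at h2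
          exact absurd h2 (not_le.mpr hb)
        · rwa [min_eq_right h0] at h2
      rw [le_antisymm hab' hba]
      exact ExteriorAlgebra.ι_sq_zero _
    · rw [hb]; simp
    · -- ν b > 0 ⟹ ν a = 0
      have h0a : 0 ≤ ν a := by rwa [min_eq_left hb.le] at h1
      have ha0 : ν a ≤ 0 := by
        rcases min_le_iff.mp hab with h' | h'
        · exact h'
        · exact absurd h' (not_le.mpr hb)
      rw [le_antisymm ha0 h0a]
      simp
  refine ⟨RingQuot.lift ⟨f.toRingHom, hrel⟩, fun a => ?_⟩
  have := RingQuot.lift_mkRingHom_apply f.toRingHom hrel (TensorAlgebra.ι ℤ (Additive.ofMul a))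
  rw [MilnorK.symbol]
  exact this.trans (hf a)
end

section
/- Let Γ ⊆ Γ' be finitely generated free abelian groups of the same rank with index [Γ' : Γ] prime to p. Then the inclusion ⋀Γ ⊆ ⋀Γ' has index prime to p, and consequently induces an isomorphism (⋀Γ) ⊗ ℚ_p/ℤ_p ≅ (⋀Γ') ⊗ ℚ_p/ℤ_p. -/
open TensorProduct

/-- The subgroup `ℤ_p ⊆ ℚ_p`, as a `ℤ`-submodule. -/
noncomputable def ZpInQp (p : ℕ) [Fact p.Prime] : Submodule ℤ ℚ_[p] :=
  Submodule.span ℤ (Set.range ((↑) : ℤ_[p] → ℚ_[p]))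

/-- The Prüfer-type group `ℚ_p/ℤ_p`, as a `ℤ`-module. -/
noncomputable abbrev QpZp (p : ℕ) [Fact p.Prime] : Type := ℚ_[p] ⧸ ZpInQp p

lemma mem_ZpInQp {p : ℕ} [Fact p.Prime] {x : ℚ_[p]} :
    x ∈ ZpInQp p ↔ ∃ y : ℤ_[p], (y : ℚ_[p]) = x := by
  constructor
  · intro hx
    refine Submodule.span_induction ?_ ?_ ?_ ?_ hx
    · rintro _ ⟨y, rfl⟩; exact ⟨y, rfl⟩
    · exact ⟨0, by simp⟩
    · rintro a b - - ⟨y, rfl⟩ ⟨z, rfl⟩; exact ⟨y + z, by push_cast; ring⟩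
    · rintro c a - ⟨y, rfl⟩
      exact ⟨c • y, by rw [zsmul_eq_mul, zsmul_eq_mul]; push_cast; ring⟩
  · rintro ⟨y, rfl⟩; exact Submodule.subset_span ⟨y, rfl⟩

lemma isUnit_cast_of_not_dvd (p : ℕ) [Fact p.Prime] {m : ℕ} (hm : ¬ (p:ℕ) ∣ m) :
    IsUnit (m : ℤ_[p]) := by
  rw [PadicInt.isUnit_iff]
  refine le_antisymm (PadicInt.norm_le_one _) (not_lt.mp fun hlt => hm ?_)
  have : ‖((m : ℤ) : ℤ_[p])‖ < 1 := by push_cast; exact_mod_cast hlt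
  exact_mod_cast (PadicInt.norm_int_lt_one_iff_dvd (m : ℤ)).mp this

lemma smul_bij_QpZp (p : ℕ) [Fact p.Prime] {m : ℕ} (hm0 : m ≠ 0) (hm : ¬ (p:ℕ) ∣ m) :
    Function.Bijective (fun t : QpZp p => (m : ℤ) • t) := by
  have hmQ : (m : ℚ_[p]) ≠ 0 := Nat.cast_ne_zero.mpr hm0
  obtain ⟨u, hu⟩ := isUnit_cast_of_not_dvd p hm
  constructor
  · -- injective
    have key : ∀ t : QpZp p, (m : ℤ) • t = 0 → t = 0 := by
      intro t ht
      obtain ⟨x, rfl⟩ := Submodule.Quotient.mk_surjective _ t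
      rw [← Submodule.Quotient.mk_smul, Submodule.Quotient.mk_eq_zero] at ht
      rw [Submodule.Quotient.mk_eq_zero]
      obtain ⟨y, hy⟩ := mem_ZpInQp.mp ht
      rw [zsmul_eq_mul] at hy
      refine mem_ZpInQp.mpr ⟨(↑u⁻¹ : ℤ_[p]) * y, ?_⟩
      push_cast
      rw [hy]
      push_cast
      have hum : ((↑u⁻¹ : ℤ_[p]) : ℚ_[p]) * (m : ℚ_[p]) = 1 := by
        have : ((↑u⁻¹ : ℤ_[p]) : ℚ_[p]) * ((↑u : ℤ_[p]) : ℚ_[p]) = 1 := by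
          rw [← PadicInt.coe_mul]
          norm_cast
          simp
        rw [hu] at this
        simpa using this
      calc ((↑u⁻¹ : ℤ_[p]) : ℚ_[p]) * ((m : ℚ_[p]) * x)
          = (((↑u⁻¹ : ℤ_[p]) : ℚ_[p]) * (m : ℚ_[p])) * x := by ring
        _ = x := by rw [hum, one_mul]
    intro a b hab
    have hab' : (m : ℤ) • a = (m : ℤ) • b := hab
    have h0 : (m : ℤ) • (a - b) = 0 := by rw [smul_sub, hab', sub_self]
    exact sub_eq_zero.mp (key _ h0)
  · intro t
    obtain ⟨x, rfl⟩ := Submodule.Quotient.mk_surjective _ t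
    refine ⟨Submodule.Quotient.mk ((m : ℚ_[p])⁻¹ * x), ?_⟩
    show (m : ℤ) • (Submodule.Quotient.mk ((m : ℚ_[p])⁻¹ * x) : QpZp p) = _
    rw [← Submodule.Quotient.mk_smul]
    congr 1
    rw [zsmul_eq_mul]
    push_cast
    field_simp


lemma rTensor_lsmul_bij (p : ℕ) [Fact p.Prime] {M : Type*} [AddCommGroup M] [Module ℤ M]
    {m : ℕ} (hm0 : m ≠ 0) (hm : ¬ (p:ℕ) ∣ m) :
    Function.Bijective
      (LinearMap.rTensor (QpZp p) (LinearMap.lsmul ℤ M (m : ℤ))) := by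
  have hb : Function.Bijective (LinearMap.lsmul ℤ (QpZp p) (m : ℤ)) := by
    have := smul_bij_QpZp p hm0 hm
    convert this using 1
    funext t; exact LinearMap.lsmul_apply _ _
  let e : QpZp p ≃ₗ[ℤ] QpZp p := LinearEquiv.ofBijective _ hb
  have he : ∀ t : QpZp p, (m : ℤ) • (e.symm t) = t := fun t => e.apply_symm_apply t
  set F := LinearMap.rTensor (QpZp p) (LinearMap.lsmul ℤ M (m : ℤ)) with hF
  set L := LinearMap.lTensor M e.symm.toLinearMap with hL
  have hc : ∀ (y : M) (s : QpZp p),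
      (LinearMap.lsmul ℤ M (m : ℤ) y) ⊗ₜ[ℤ] (e.symm s) = y ⊗ₜ[ℤ] s := by
    intro y s
    have h1 := TensorProduct.smul_tmul_smul (R := ℤ) (m : ℤ) 1 y (e.symm s)
    have h2 := TensorProduct.smul_tmul_smul (R := ℤ) 1 (m : ℤ) y (e.symm s)
    rw [one_smul] at h1
    rw [one_mul] at h2
    rw [LinearMap.lsmul_apply, h1, mul_one, ← h2]
    congr 1
    · exact @one_smul ℤ M _ (‹Module ℤ M›.toMulAction) y
    · exact e.apply_symm_apply s
  have key : ∀ z : M ⊗[ℤ] QpZp p, L (F z) = z ∧ F (L z) = z := by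
    intro z
    induction z using TensorProduct.induction_on with
    | zero => simp
    | tmul x t =>
        constructor
        · rw [hF, hL, LinearMap.rTensor_tmul, LinearMap.lTensor_tmul]
          rw [LinearEquiv.coe_coe, hc]
        · rw [hF, hL, LinearMap.lTensor_tmul, LinearMap.rTensor_tmul]
          rw [LinearEquiv.coe_coe, hc]
    | add a b ha hb =>
        exact ⟨by rw [map_add, map_add, ha.1, hb.1], by rw [map_add, map_add, ha.2, hb.2]⟩
  exact ⟨Function.LeftInverse.injective (g := L) (fun z => (key z).1),
    Function.RightInverse.surjective (g := L) (fun z => (key z).2)⟩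

open ExteriorAlgebra in
lemma iMulti_smul_sum_mem_span {R M : Type*} [CommRing R] [AddCommGroup M] [Module R M]
    {r : ℕ} (u : Fin r → M) (i : ℕ) (c : Fin i → Fin r → R) :
    ιMulti R i (fun j => ∑ l : Fin r, c j l • u l) ∈ Submodule.span R
      (Set.range fun g : Fin i → Fin r => ιMulti R i (u ∘ g)) := by
  classical
  have hexp := (ιMulti R i (M := M)).toMultilinearMap.map_sum_finset
    (A := fun _ : Fin i => (Finset.univ : Finset (Fin r)))
    (g := fun (j : Fin i) (l : Fin r) => c j l • u l)
  rw [show ((ιMulti R i (M := M)) fun j => ∑ l : Fin r, c j l • u l)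
      = ((ιMulti R i (M := M)).toMultilinearMap fun j => ∑ l ∈ Finset.univ,
        c j l • u l) from rfl, hexp]
  refine Submodule.sum_mem _ fun g hg => ?_
  rw [MultilinearMap.map_smul_univ]
  exact Submodule.smul_mem _ _ (Submodule.subset_span ⟨fun j => g j, rfl⟩)

open ExteriorAlgebra in
lemma iMulti_basis_prod_zero {R M : Type*} [CommRing R] [AddCommGroup M] [Module R M]
    {r : ℕ} (u : Fin r → M) {i : ℕ} (hi : r < i) (g : Fin i → Fin r) :
    ιMulti R i (M := M) (u ∘ g) = 0 := by
  have : ¬ Function.Injective g := by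
    intro hginj
    have := Fintype.card_le_of_injective g hginj
    simp only [Fintype.card_fin] at this
    omega
  rw [Function.not_injective_iff] at this
  obtain ⟨j, j', hjj', hne⟩ := this
  exact (ιMulti R i (M := M)).map_eq_zero_of_eq (u ∘ g)
    (show (u ∘ g) j = (u ∘ g) j' by simp [Function.comp, hjj']) hne

open ExteriorAlgebra in
lemma exteriorAlgebra_finite {M : Type*} [AddCommGroup M] [Module ℤ M]
    [Module.Free ℤ M] [Module.Finite ℤ M] : Module.Finite ℤ (ExteriorAlgebra ℤ M) := by
  classical
  set r := Module.finrank ℤ M with hr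
  let b : Module.Basis (Fin r) ℤ M := Module.finBasis ℤ M
  set T : Set (ExteriorAlgebra ℤ M) :=
    ⋃ i ∈ Finset.range (r + 1), Set.range (fun g : Fin i → Fin r => ιMulti ℤ i (⇑b ∘ g))
    with hT
  have hTfin : T.Finite :=
    Set.Finite.biUnion (Finset.range (r + 1)).finite_toSet
      (fun i _ => Set.finite_range _)
  have hspan : Submodule.span ℤ T = ⊤ := by
    refine le_antisymm le_top ?_
    have htop : (⨆ i : ℕ, ⋀[ℤ]^i M) = ⊤ :=
      (DirectSum.Decomposition.isInternal (fun i : ℕ => ⋀[ℤ]^i M)).submodule_iSup_eq_top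
    refine htop.ge.trans ?_
    refine iSup_le fun i => ?_
    rw [← ExteriorAlgebra.ιMulti_span_fixedDegree]
    refine (Submodule.span_le (p := Submodule.span ℤ T)).mpr ?_
    rintro _ ⟨v, rfl⟩
    have hv := funext fun j => (b.sum_repr (v j)).symm
    rw [hv]
    have h0 := iMulti_smul_sum_mem_span (R := ℤ) (u := ⇑b) i
      (fun j l => b.repr (v j) l)
    by_cases hi : i ≤ r
    · refine Submodule.span_mono ?_ h0
      intro z hz
      refine Set.mem_biUnion ?_ hz
      exact Finset.mem_coe.mpr (Finset.mem_range.mpr (Nat.lt_succ_of_le hi))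
    · have hz : (Set.range fun g : Fin i → Fin r => ιMulti ℤ i (⇑b ∘ g)) ⊆ {0} := by
        rintro _ ⟨g, rfl⟩
        exact iMulti_basis_prod_zero ⇑b (by omega) g
      have hle : Submodule.span ℤ (Set.range fun g : Fin i → Fin r => ιMulti ℤ i (⇑b ∘ g))
          ≤ ⊥ := by
        rw [← Submodule.span_zero_singleton (R := ℤ)]
        exact Submodule.span_mono hz
      have hv0 := hle h0
      rw [Submodule.mem_bot] at hv0
      rw [hv0]
      exact Submodule.zero_mem _
  have hfg : (⊤ : Submodule ℤ (ExteriorAlgebra ℤ M)).FG := by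
    rw [← hspan, ← Set.Finite.coe_toFinset hTfin]
    exact ⟨hTfin.toFinset, rfl⟩
  exact Module.finite_def.mpr hfg

open ExteriorAlgebra in
lemma map_lsmul_apply_of_mem_power {R M : Type*} [CommRing R] [AddCommGroup M] [Module R M]
    (c : R) {i : ℕ} {x : ExteriorAlgebra R M} (hx : x ∈ ⋀[R]^i M) :
    ExteriorAlgebra.map (LinearMap.lsmul R M c) x = c ^ i • x := by
  refine Submodule.pow_induction_on_left'
    (M := LinearMap.range (ExteriorAlgebra.ι R (M := M)))
    (C := fun n y _ => ExteriorAlgebra.map (LinearMap.lsmul R M c) y = c ^ n • y)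
    ?_ ?_ ?_ hx
  · intro r; rw [AlgHom.commutes, pow_zero, one_smul]
  · intro x y n hx hy ihx ihy; rw [map_add, ihx, ihy, smul_add]
  · rintro m ⟨v, rfl⟩ n y hy ihy
    rw [map_mul, ihy, ExteriorAlgebra.map_apply_ι, LinearMap.lsmul_apply, map_smul,
      smul_mul_smul_comm, ← pow_succ']

open ExteriorAlgebra in
lemma exists_pow_smul_eq_zero_of_map_lsmul_eq_zero {R M : Type*} [CommRing R]
    [AddCommGroup M] [Module R M] (c : R) {x : ExteriorAlgebra R M}
    (hx : ExteriorAlgebra.map (LinearMap.lsmul R M c) x = 0) :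
    ∃ k : ℕ, c ^ k • x = 0 := by
  classical
  have hsum := DirectSum.sum_support_decompose (fun i : ℕ => ⋀[R]^i M) x
  set 𝒜 : ℕ → Submodule R (ExteriorAlgebra R M) := fun i : ℕ => ⋀[R]^i M
  set s := (DirectSum.decompose 𝒜 x).support with hs
  have h0 : (0 : ExteriorAlgebra R M)
      = ∑ j ∈ s, c ^ j • (DirectSum.decompose 𝒜 x j : ExteriorAlgebra R M) := by
    rw [← hx]
    conv_lhs => rw [← hsum]
    rw [map_sum]
    exact Finset.sum_congr rfl fun j _ =>
      map_lsmul_apply_of_mem_power c (SetLike.coe_mem _)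
  have hcomp : ∀ i, c ^ i • (DirectSum.decompose 𝒜 x i : ExteriorAlgebra R M) = 0 := by
    intro i
    by_cases hi : i ∈ s
    · have := congrArg (fun y => (DirectSum.decompose 𝒜 y i : ExteriorAlgebra R M)) h0
      simp only [DirectSum.decompose_zero, DirectSum.zero_apply, ZeroMemClass.coe_zero,
        DirectSum.decompose_sum] at this
      rw [DFinsupp.finset_sum_apply, AddSubmonoidClass.coe_finset_sum] at this
      rw [Finset.sum_eq_single_of_mem i hi (fun j _ hne =>
        DirectSum.decompose_of_mem_ne 𝒜 (Submodule.smul_mem _ _ (SetLike.coe_mem _)) hne)]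
        at this
      rw [DirectSum.decompose_of_mem_same 𝒜
        (Submodule.smul_mem _ _ (SetLike.coe_mem _))] at this
      exact this.symm
    · rw [DFinsupp.notMem_support_iff.mp hi]
      simp
  refine ⟨s.sup id, ?_⟩
  conv_lhs => rw [← hsum]
  rw [Finset.smul_sum]
  refine Finset.sum_eq_zero fun j hj => ?_
  have hle : j ≤ s.sup id := Finset.le_sup (f := id) hj
  calc c ^ s.sup id • (DirectSum.decompose 𝒜 x j : ExteriorAlgebra R M)
      = c ^ (s.sup id - j) • (c ^ j • (DirectSum.decompose 𝒜 x j : ExteriorAlgebra R M)) := by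
        rw [smul_smul, ← pow_add, Nat.sub_add_cancel hle]
    _ = 0 := by rw [hcomp, smul_zero]

set_option maxHeartbeats 1000000 in
set_option synthInstance.maxHeartbeats 200000 in
/-- Let `Γ ⊆ Γ'` be finitely generated free abelian groups of the same
rank with index `[Γ' : Γ]` prime to `p`. Then the inclusion `⋀Γ ⊆ ⋀Γ'` (induced on
exterior algebras over `ℤ`) has index prime to `p`, and consequently induces an
isomorphism `(⋀Γ) ⊗ ℚ_p/ℤ_p ≅ (⋀Γ') ⊗ ℚ_p/ℤ_p`. -/
theorem stmt_3 (p : ℕ) [Fact p.Prime] {Γ' : Type*} [AddCommGroup Γ']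
    [Module.Free ℤ Γ'] [Module.Finite ℤ Γ'] (Γ : Submodule ℤ Γ')
    (hrank : Module.finrank ℤ Γ = Module.finrank ℤ Γ')
    (hindex : ¬ (p : ℕ) ∣ Γ.toAddSubgroup.index) :
    (¬ (p : ℕ) ∣ (Subalgebra.toSubmodule
        (ExteriorAlgebra.map Γ.subtype).range).toAddSubgroup.index) ∧
    Function.Bijective
      (LinearMap.rTensor (QpZp p) (ExteriorAlgebra.map Γ.subtype).toLinearMap :
        ExteriorAlgebra ℤ Γ ⊗[ℤ] QpZp p → ExteriorAlgebra ℤ Γ' ⊗[ℤ] QpZp p) := by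
  classical
  have hp : p.Prime := Fact.out
  set n := Γ.toAddSubgroup.index with hn
  have hn0 : n ≠ 0 := fun h => hindex (h ▸ dvd_zero p)
  haveI : Γ.toAddSubgroup.FiniteIndex := ⟨hn0⟩
  set f := ExteriorAlgebra.map Γ.subtype with hf
  set S : Submodule ℤ (ExteriorAlgebra ℤ Γ') := Subalgebra.toSubmodule f.range with hS
  -- every element of the big exterior algebra has an `n`-power multiple in `S`
  have hcoker : ∀ x : ExteriorAlgebra ℤ Γ', ∃ k : ℕ, (n : ℤ) ^ k • x ∈ S := by
    intro x
    induction x using ExteriorAlgebra.induction with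
    | algebraMap r =>
        exact ⟨0, by rw [pow_zero, one_smul]; exact Subalgebra.algebraMap_mem f.range r⟩
    | ι γ =>
        refine ⟨1, ?_⟩
        have hmemΓ : (n : ℤ) • γ ∈ Γ := by
          rw [Nat.cast_smul_eq_nsmul]
          exact (Submodule.mem_toAddSubgroup _).mp (Γ.toAddSubgroup.nsmul_index_mem γ)
        rw [pow_one, ← map_smul]
        have : (n : ℤ) • γ = Γ.subtype ⟨(n : ℤ) • γ, hmemΓ⟩ := rfl
        rw [this, ← ExteriorAlgebra.map_apply_ι]
        exact (Subalgebra.mem_toSubmodule _).mpr ⟨ExteriorAlgebra.ι ℤ ⟨(n : ℤ) • γ, hmemΓ⟩, rfl⟩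
    | mul x y hx hy =>
        obtain ⟨k₁, h₁⟩ := hx
        obtain ⟨k₂, h₂⟩ := hy
        refine ⟨k₁ + k₂, ?_⟩
        rw [pow_add, ← smul_mul_smul_comm]
        rw [Subalgebra.mem_toSubmodule] at h₁ h₂ ⊢
        exact mul_mem h₁ h₂
    | add x y hx hy =>
        obtain ⟨k₁, h₁⟩ := hx
        obtain ⟨k₂, h₂⟩ := hy
        refine ⟨k₁ + k₂, ?_⟩
        rw [smul_add, pow_add]
        refine Submodule.add_mem _ ?_ ?_
        · rw [mul_comm, mul_smul]
          exact Submodule.smul_mem _ _ h₁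
        · rw [mul_smul]
          exact Submodule.smul_mem _ _ h₂
  haveI hBfin : Module.Finite ℤ (ExteriorAlgebra ℤ Γ') := exteriorAlgebra_finite
  -- the quotient is torsion, with torsion prime to p
  have hQtor : ∀ q : ExteriorAlgebra ℤ Γ' ⧸ S, ∃ k : ℕ, (n ^ k) • q = 0 := by
    intro q
    obtain ⟨x, rfl⟩ := Submodule.Quotient.mk_surjective S q
    obtain ⟨k, hk⟩ := hcoker x
    refine ⟨k, ?_⟩
    rw [← Nat.cast_smul_eq_nsmul ℤ, Nat.cast_pow, ← Submodule.Quotient.mk_smul,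
      Submodule.Quotient.mk_eq_zero]
    exact hk
  haveI hQfin : Finite (ExteriorAlgebra ℤ Γ' ⧸ S) := by
    haveI : AddGroup.FG (ExteriorAlgebra ℤ Γ' ⧸ S) :=
      Module.Finite.iff_addGroup_fg.mp inferInstance
    apply AddCommGroup.finite_of_fg_torsion
    intro q
    obtain ⟨k, hk⟩ := hQtor q
    exact isOfFinAddOrder_iff_nsmul_eq_zero.mpr
      ⟨n ^ k, Nat.pos_of_ne_zero (pow_ne_zero _ hn0), hk⟩
  set m := S.toAddSubgroup.index with hm
  have hmcard : m = Nat.card (ExteriorAlgebra ℤ Γ' ⧸ S) := rfl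
  have hm0 : m ≠ 0 := by
    rw [hmcard]
    exact Nat.card_ne_zero.mpr ⟨⟨0⟩, hQfin⟩
  have hpm : ¬ (p : ℕ) ∣ m := by
    intro hdvd
    haveI : Fintype (ExteriorAlgebra ℤ Γ' ⧸ S) := Fintype.ofFinite _
    have hdvd' : p ∣ Fintype.card (ExteriorAlgebra ℤ Γ' ⧸ S) := by
      rw [← Nat.card_eq_fintype_card, ← hmcard]; exact hdvd
    obtain ⟨q, hq⟩ := exists_prime_addOrderOf_dvd_card p hdvd'
    obtain ⟨k, hk⟩ := hQtor q
    have hdvd2 := addOrderOf_dvd_of_nsmul_eq_zero hk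
    rw [hq] at hdvd2
    exact hindex (hp.dvd_of_dvd_pow hdvd2)
  refine ⟨hpm, ?_⟩
  -- bijectivity
  haveI : S.toAddSubgroup.FiniteIndex := ⟨hm0⟩
  have hmS : ∀ x : ExteriorAlgebra ℤ Γ', (m : ℤ) • x ∈ S := fun x => by
    rw [Nat.cast_smul_eq_nsmul]
    exact (Submodule.mem_toAddSubgroup _).mp (S.toAddSubgroup.nsmul_index_mem x)
  -- kernel of f is n-power torsion
  have hker : ∀ a : ExteriorAlgebra ℤ Γ, f a = 0 → ∃ k : ℕ, (n : ℤ) ^ k • a = 0 := by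
    intro a ha
    have hsmem : ∀ γ' : Γ', (LinearMap.lsmul ℤ Γ' (n : ℤ)) γ' ∈ Γ := fun γ' => by
      rw [LinearMap.lsmul_apply, Nat.cast_smul_eq_nsmul]
      exact (Submodule.mem_toAddSubgroup _).mp (Γ.toAddSubgroup.nsmul_index_mem γ')
    set s : Γ' →ₗ[ℤ] Γ := (LinearMap.lsmul ℤ Γ' (n : ℤ)).codRestrict Γ hsmem with hsdef
    have hcomp : s ∘ₗ Γ.subtype = LinearMap.lsmul ℤ Γ (n : ℤ) := by
      apply LinearMap.ext
      intro γ
      apply Subtype.ext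
      simp [hsdef, LinearMap.codRestrict]
    have hψ : ExteriorAlgebra.map (LinearMap.lsmul ℤ Γ (n : ℤ)) a = 0 := by
      rw [← hcomp, ← ExteriorAlgebra.map_comp_map]
      show (ExteriorAlgebra.map s) (f a) = 0
      rw [ha, map_zero]
    exact exists_pow_smul_eq_zero_of_map_lsmul_eq_zero _ hψ
  -- the inclusion of the kernel tensors to zero
  have hzero : LinearMap.rTensor (QpZp p) (LinearMap.ker f.toLinearMap).subtype = 0 := by
    apply TensorProduct.ext'
    intro a t
    rw [LinearMap.rTensor_tmul, LinearMap.zero_apply]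
    obtain ⟨k, hk⟩ := hker a.1 (LinearMap.mem_ker.mp a.2)
    have hnk0 : n ^ k ≠ 0 := pow_ne_zero _ hn0
    have hpnk : ¬ (p : ℕ) ∣ n ^ k := fun h => hindex (hp.dvd_of_dvd_pow h)
    obtain ⟨t', ht'⟩ := (smul_bij_QpZp p hnk0 hpnk).2 t
    replace ht' : ((n ^ k : ℕ) : ℤ) • t' = t := ht'
    have ha0 : ((n ^ k : ℕ) : ℤ) • a.1 = 0 := by rw [Nat.cast_pow]; exact hk
    calc (LinearMap.ker f.toLinearMap).subtype a ⊗ₜ[ℤ] t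
        = a.1 ⊗ₜ[ℤ] (((n ^ k : ℕ) : ℤ) • t') := by rw [Submodule.subtype_apply, ht']
      _ = (((n ^ k : ℕ) : ℤ) • a.1) ⊗ₜ[ℤ] t' := (TensorProduct.smul_tmul _ _ _).symm
      _ = 0 := by rw [ha0, TensorProduct.zero_tmul]
  -- factor f through its range
  have hpmem : ∀ a, f.toLinearMap a ∈ S := fun a => (Subalgebra.mem_toSubmodule _).mpr ⟨a, rfl⟩
  set f' : ExteriorAlgebra ℤ Γ →ₗ[ℤ] S := f.toLinearMap.codRestrict S hpmem with hf'
  have hf'surj : Function.Surjective f' := by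
    rintro ⟨y, hy⟩
    obtain ⟨a, ha⟩ := (Subalgebra.mem_toSubmodule _).mp hy
    exact ⟨a, Subtype.ext ha⟩
  have hexact : Function.Exact (LinearMap.ker f.toLinearMap).subtype f' :=
    LinearMap.exact_iff.mpr (by rw [LinearMap.ker_codRestrict, Submodule.range_subtype])
  have hTexact := rTensor_exact (QpZp p) hexact hf'surj
  have hinj' : Function.Injective (LinearMap.rTensor (QpZp p) f') := by
    rw [← LinearMap.ker_eq_bot, hTexact.linearMap_ker_eq, hzero, LinearMap.range_zero]
  have hsurj' : Function.Surjective (LinearMap.rTensor (QpZp p) f') :=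
    LinearMap.rTensor_surjective _ hf'surj
  -- the inclusion S ↪ B tensors to a bijection
  set i := S.subtype with hi
  set j : ExteriorAlgebra ℤ Γ' →ₗ[ℤ] S :=
    (LinearMap.lsmul ℤ (ExteriorAlgebra ℤ Γ') (m : ℤ)).codRestrict S hmS with hj
  have hij : i ∘ₗ j = LinearMap.lsmul ℤ (ExteriorAlgebra ℤ Γ') (m : ℤ) :=
    LinearMap.subtype_comp_codRestrict _ _ _
  have hji : j ∘ₗ i = LinearMap.lsmul ℤ S (m : ℤ) := by
    apply LinearMap.ext
    intro x
    apply Subtype.ext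
    simp [hj, hi, LinearMap.codRestrict]
  have hbijB := rTensor_lsmul_bij p (M := ExteriorAlgebra ℤ Γ') hm0 hpm
  have hbijS := rTensor_lsmul_bij p (M := S) hm0 hpm
  rw [← hij, LinearMap.rTensor_comp] at hbijB
  rw [← hji, LinearMap.rTensor_comp] at hbijS
  rw [LinearMap.coe_comp] at hbijB hbijS
  have hisurj : Function.Surjective ⇑(LinearMap.rTensor (QpZp p) i) :=
    Function.Surjective.of_comp hbijB.2
  have hiinj : Function.Injective ⇑(LinearMap.rTensor (QpZp p) i) :=
    Function.Injective.of_comp hbijS.1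
  have hfact : f.toLinearMap = i ∘ₗ f' := (LinearMap.subtype_comp_codRestrict _ _ _).symm
  rw [hfact, LinearMap.rTensor_comp, LinearMap.coe_comp]
  exact ⟨hiinj.comp hinj', hisurj.comp hsurj'⟩
end

section
/- Let Γ ⊆ Γ' be finitely generated free abelian groups with [Γ' : Γ] finite and prime to p. Then for every n ≥ 1 the induced map (⋀Γ)/pⁿ → (⋀Γ')/pⁿ is an isomorphism. -/
open TensorProduct

lemma aux_map_smul_id_sub {M : Type*} [AddCommGroup M] [Module ℤ M]
    (N : ℕ) (c : ℤ) (hc : (N : ℤ) ∣ c - 1) (x : ExteriorAlgebra ℤ M) :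
    ∃ w : ExteriorAlgebra ℤ M,
      ExteriorAlgebra.map (c • (LinearMap.id : M →ₗ[ℤ] M)) x
        = x + algebraMap ℤ (ExteriorAlgebra ℤ M) (N : ℤ) * w := by
  induction x using ExteriorAlgebra.induction with
  | algebraMap r => exact ⟨0, by simp⟩
  | ι v =>
      obtain ⟨t, ht⟩ := hc
      refine ⟨algebraMap ℤ (ExteriorAlgebra ℤ M) t * ExteriorAlgebra.ι ℤ v, ?_⟩
      have hct : c = (N : ℤ) * t + 1 := by omega
      rw [ExteriorAlgebra.map_apply_ι]
      simp [hct, add_smul, mul_smul]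
      rw [add_comm, ← mul_assoc, ← mul_assoc,
        (Nat.cast_commute (α := ExteriorAlgebra ℤ M) N
          ((t : ℤ) : ExteriorAlgebra ℤ M)).symm.eq]
  | mul a b ha hb =>
      obtain ⟨w₁, hw₁⟩ := ha
      obtain ⟨w₂, hw₂⟩ := hb
      refine ⟨a * w₂ + w₁ * b + algebraMap ℤ (ExteriorAlgebra ℤ M) (N : ℤ) * (w₁ * w₂), ?_⟩
      rw [map_mul, hw₁, hw₂]
      simp only [mul_add, add_mul, Algebra.left_comm, mul_assoc]
      abel
  | add a b ha hb =>
      obtain ⟨w₁, hw₁⟩ := ha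
      obtain ⟨w₂, hw₂⟩ := hb
      refine ⟨w₁ + w₂, ?_⟩
      rw [map_add, hw₁, hw₂]
      simp only [mul_add]
      abel

lemma aux_rTensor_map_smul_id {M : Type*} [AddCommGroup M] [Module ℤ M]
    (N : ℕ) (c : ℤ) (hc : (N : ℤ) ∣ c - 1) :
    LinearMap.rTensor (ZMod N)
        (ExteriorAlgebra.map (c • (LinearMap.id : M →ₗ[ℤ] M))).toLinearMap
      = LinearMap.id := by
  apply TensorProduct.ext'
  intro x a
  obtain ⟨w, hw⟩ := aux_map_smul_id_sub N c hc x
  rw [LinearMap.rTensor_tmul, LinearMap.id_apply, AlgHom.toLinearMap_apply, hw,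
    add_tmul, ← Algebra.smul_def]
  erw [TensorProduct.smul_tmul]
  have h0 : (N : ℤ) • a = 0 := by
    rw [zsmul_eq_mul]; push_cast; simp
  rw [h0, TensorProduct.tmul_zero, add_zero]

/-- Let `Γ ⊆ Γ'` be finitely generated free abelian groups with
`[Γ' : Γ]` finite and prime to `p`. Then for every `n ≥ 1` the induced map
`(⋀Γ)/pⁿ → (⋀Γ')/pⁿ` is an isomorphism. (Here `A/pⁿ` is realized as `A ⊗ ℤ/pⁿ`.) -/
theorem stmt_4 (p : ℕ) (hp : p.Prime) {Γ' : Type*} [AddCommGroup Γ']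
    [Module.Free ℤ Γ'] [Module.Finite ℤ Γ'] (Γ : Submodule ℤ Γ')
    (hfin : Γ.toAddSubgroup.index ≠ 0)
    (hindex : ¬ (p : ℕ) ∣ Γ.toAddSubgroup.index) :
    ∀ n : ℕ, 1 ≤ n →
      Function.Bijective
        (LinearMap.rTensor (ZMod (p ^ n)) (ExteriorAlgebra.map Γ.subtype).toLinearMap :
          ExteriorAlgebra ℤ Γ ⊗[ℤ] ZMod (p ^ n) → ExteriorAlgebra ℤ Γ' ⊗[ℤ] ZMod (p ^ n)) := by
  intro n hn
  set m : ℕ := Γ.toAddSubgroup.index with hm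
  have hmem : ∀ x : Γ', ((m : ℤ) : ℤ) • x ∈ Γ := by
    intro x
    have h := Γ.toAddSubgroup.nsmul_index_mem x
    rw [natCast_zsmul]
    exact h
  let g : Γ' →ₗ[ℤ] Γ :=
    { toFun := fun x => ⟨(m : ℤ) • x, hmem x⟩
      map_add' := fun x y => Subtype.ext (smul_add ((m : ℕ) : ℤ) x y)
      map_smul' := fun r x => Subtype.ext (smul_comm ((m : ℕ) : ℤ) r x) }
  have h1 : Nat.Coprime (p ^ n) m :=
    ((Nat.Prime.coprime_iff_not_dvd hp).mpr hindex).pow_left n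
  have hcop : IsCoprime ((p ^ n : ℕ) : ℤ) ((m : ℕ) : ℤ) := by
    rw [Int.isCoprime_iff_gcd_eq_one, Int.gcd_natCast_natCast]
    exact h1
  obtain ⟨a, u, hau⟩ := hcop
  have hdvd : ((p ^ n : ℕ) : ℤ) ∣ u * (m : ℤ) - 1 := ⟨-a, by linarith [hau]⟩
  have hcomp1 : Γ.subtype ∘ₗ (u • g) = (u * (m : ℤ)) • (LinearMap.id : Γ' →ₗ[ℤ] Γ') := by
    refine LinearMap.ext fun x => ?_
    show u • ((m : ℤ) • x) = (u * (m : ℤ)) • x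
    rw [smul_smul]
  have hcomp2 : (u • g) ∘ₗ Γ.subtype = (u * (m : ℤ)) • (LinearMap.id : Γ →ₗ[ℤ] Γ) := by
    refine LinearMap.ext fun x => Subtype.ext ?_
    show u • ((m : ℤ) • (x : Γ')) = (u * (m : ℤ)) • (x : Γ')
    rw [smul_smul]
  set F := (ExteriorAlgebra.map Γ.subtype).toLinearMap
  set G := (ExteriorAlgebra.map (u • g)).toLinearMap
  have hFG : LinearMap.rTensor (ZMod (p ^ n)) F ∘ₗ LinearMap.rTensor (ZMod (p ^ n)) G
      = LinearMap.id := by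
    rw [← LinearMap.rTensor_comp]
    have hc : F ∘ₗ G = (ExteriorAlgebra.map ((u * (m : ℤ)) •
        (LinearMap.id : Γ' →ₗ[ℤ] Γ'))).toLinearMap := by
      have h := ExteriorAlgebra.map_comp_map (u • g) Γ.subtype
      rw [hcomp1] at h
      exact congrArg AlgHom.toLinearMap h
    rw [hc, aux_rTensor_map_smul_id (p ^ n) (u * (m : ℤ)) hdvd]
  have hGF : LinearMap.rTensor (ZMod (p ^ n)) G ∘ₗ LinearMap.rTensor (ZMod (p ^ n)) F
      = LinearMap.id := by
    rw [← LinearMap.rTensor_comp]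
    have hc : G ∘ₗ F = (ExteriorAlgebra.map ((u * (m : ℤ)) •
        (LinearMap.id : Γ →ₗ[ℤ] Γ))).toLinearMap := by
      have h := ExteriorAlgebra.map_comp_map Γ.subtype (u • g)
      rw [hcomp2] at h
      exact congrArg AlgHom.toLinearMap h
    rw [hc, aux_rTensor_map_smul_id (p ^ n) (u * (m : ℤ)) hdvd]
  constructor
  · intro x y hxy
    have hx := LinearMap.congr_fun hGF x
    have hy := LinearMap.congr_fun hGF y
    simp only [LinearMap.comp_apply, LinearMap.id_apply] at hx hy
    rw [← hx, ← hy, hxy]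
  · intro y
    refine ⟨LinearMap.rTensor (ZMod (p ^ n)) G y, ?_⟩
    have := LinearMap.congr_fun hFG y
    simpa using this
end

section
/- Let Γ = ℤ^r, ω ∈ ⋀²Γ ⊗ ℚ_p/ℤ_p corresponding to (1/p^N) M for a skew-symmetric integer matrix M, and suppose there is a basis e₁,…,e_r of a free abelian group Γ' ⊇ Γ with Γ spanned by d₁e₁,…,d_re_r where d_i = ±1 for all i > n, each d_i a power of p up to sign, and the image of ω in ⋀²Γ' ⊗ ℚ_p/ℤ_p is zero. Then ω lies in ⋀²W ⊗ ℚ_p/ℤ_p for some subgroup W ⊆ Γ of rank at most 2n. -/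
open TensorProduct

namespace Stmt18Aux

open ExteriorAlgebra Finset

section Alt

variable {M : Type*} [AddCommGroup M] [Module ℤ M]

noncomputable def altC (φ ψ : M →ₗ[ℤ] ℤ) : M [⋀^Fin 2]→ₗ[ℤ] ℤ :=
  ((Pi.basisFun ℤ (Fin 2)).det).compLinearMap (LinearMap.pi ![φ, ψ])

lemma altC_apply (φ ψ : M →ₗ[ℤ] ℤ) (x y : M) :
    altC φ ψ ![x, y] = φ x * ψ y - φ y * ψ x := by
  simp [altC, AlternatingMap.compLinearMap_apply, Module.Basis.det_apply, Matrix.det_fin_two,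
    Module.Basis.toMatrix_apply, LinearMap.pi_apply]
  change Matrix.det (Matrix.of fun i j => (LinearMap.pi ![φ, ψ]) (![x, y] i) j) = _
  rw [Matrix.det_fin_two]
  simp
  ring

noncomputable def fam (A : M [⋀^Fin 2]→ₗ[ℤ] ℤ) : ∀ i : ℕ, M [⋀^Fin i]→ₗ[ℤ] ℤ
  | 2 => A
  | _ => 0

noncomputable def Phi (φ ψ : M →ₗ[ℤ] ℤ) : ExteriorAlgebra ℤ M →ₗ[ℤ] ℤ :=
  liftAlternating (fam (altC φ ψ))

lemma Phi_ι_mul (φ ψ : M →ₗ[ℤ] ℤ) (x y : M) :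
    Phi φ ψ (ι ℤ x * ι ℤ y) = φ x * ψ y - φ y * ψ x := by
  unfold Phi
  erw [liftAlternating_ι_mul, liftAlternating_ι]
  show (fam (altC φ ψ) 2).curryLeft x ![y] = _
  rw [AlternatingMap.curryLeft_apply_apply]
  have h : Matrix.vecCons x ![y] = ![x, y] := rfl
  rw [h]
  show (altC φ ψ) ![x, y] = _
  rw [altC_apply]

end Alt

section Sums

variable {A : Type*} [AddCommGroup A]

lemma sum_pairs {m : ℕ} (F : Fin m → Fin m → A) (hdiag : ∀ i, F i i = 0) :
    (∑ i, ∑ j, F i j) = ∑ i, ∑ j ∈ Ioi i, (F i j + F j i) := by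
  have key : ∀ i j : Fin m, F i j =
      (if i < j then F i j else 0) + (if j < i then F i j else 0) := by
    intro i j
    rcases lt_trichotomy i j with h | h | h
    · simp [h, not_lt_of_gt h]
    · simp [h, hdiag]
    · simp [h, not_lt_of_gt h]
  calc (∑ i, ∑ j, F i j)
      = ∑ i, ∑ j, ((if i < j then F i j else 0) + (if j < i then F i j else 0)) := by
        exact Finset.sum_congr rfl fun i _ => Finset.sum_congr rfl fun j _ => key i j
    _ = (∑ i, ∑ j, if i < j then F i j else 0) + ∑ i, ∑ j, if j < i then F i j else 0 := by
        rw [← Finset.sum_add_distrib]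
        exact Finset.sum_congr rfl fun i _ => Finset.sum_add_distrib
    _ = (∑ i, ∑ j ∈ Ioi i, F i j) + ∑ i, ∑ j ∈ Ioi i, F j i := by
        have hIoi : ∀ i : Fin m, (univ.filter (fun j => i < j)) = Ioi i := by
          intro i; ext j; simp [mem_Ioi]
        have hIio : ∀ i : Fin m, (univ.filter (fun j => j < i)) = Iio i := by
          intro i; ext j; simp [mem_Iio]
        congr 1
        · exact Finset.sum_congr rfl fun i _ => by rw [← Finset.sum_filter, hIoi]
        · have h1 : ∀ i : Fin m, (∑ j, if j < i then F i j else 0) = ∑ j ∈ Iio i, F i j :=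
            fun i => by rw [← Finset.sum_filter, hIio]
          rw [Finset.sum_congr rfl fun i _ => h1 i]
          rw [Finset.sum_sigma', Finset.sum_sigma']
          exact Finset.sum_nbij' (fun x => ⟨x.2, x.1⟩) (fun x => ⟨x.2, x.1⟩)
            (by simp [mem_Iio, mem_Ioi]) (by simp [mem_Iio, mem_Ioi])
            (by intro x _; rfl) (by intro x _; rfl) (by intro x _; rfl)
    _ = ∑ i, ∑ j ∈ Ioi i, (F i j + F j i) := by
        rw [← Finset.sum_add_distrib]
        exact Finset.sum_congr rfl fun i _ => Finset.sum_add_distrib.symm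

lemma ι_mul_expand {M : Type*} [AddCommGroup M] [Module ℤ M] {r : ℕ}
    (g : Module.Basis (Fin r) ℤ M) (u v : M) :
    ι ℤ u * ι ℤ v = ∑ i, ∑ j ∈ Ioi i,
      ((g.repr u i * g.repr v j - g.repr u j * g.repr v i) •
        (ι ℤ (g i) * ι ℤ (g j))) := by
  have hrep : ∀ w : M, ι ℤ w = ∑ i, g.repr w i • ι ℤ (g i) := by
    intro w
    conv_lhs => rw [← g.sum_repr w]
    rw [map_sum]
    exact Finset.sum_congr rfl fun i _ =>
      ((ι ℤ (M := M)).map_smul _ _).trans (int_smul_eq_zsmul _ _ _)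
  rw [hrep u, hrep v, Finset.sum_mul_sum]
  have hterm : ∀ i j : Fin r, (g.repr u i • ι ℤ (g i)) * (g.repr v j • ι ℤ (g j)) =
      (g.repr u i * g.repr v j) • (ι ℤ (g i) * ι ℤ (g j)) := by
    intro i j
    rw [smul_mul_assoc, mul_smul_comm, smul_smul]
  simp only [hterm]
  rw [sum_pairs]
  case hdiag => intro i; rw [ι_sq_zero, smul_zero]
  refine Finset.sum_congr rfl fun i _ => Finset.sum_congr rfl fun j _ => ?_
  have hswap : ι ℤ (g j) * ι ℤ (g i) = -(ι ℤ (g i) * ι ℤ (g j)) :=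
    eq_neg_of_add_eq_zero_left (ι_add_mul_swap (R := ℤ) (g j) (g i))
  rw [hswap, smul_neg, sub_smul, ← sub_eq_add_neg]

end Sums

section Padic

variable (p : ℕ) [hp : Fact p.Prime]

/-- the class of `p^{-N}` in `ℚ_p/ℤ_p`. -/
noncomputable def tQ (N : ℕ) : QpZp p := Submodule.Quotient.mk (((p : ℚ_[p]) ^ N)⁻¹)

lemma hpQ : (p : ℚ_[p]) ≠ 0 := Nat.cast_ne_zero.mpr hp.out.ne_zero

lemma coe_mem_ZpInQp (z : ℤ_[p]) : (z : ℚ_[p]) ∈ ZpInQp p :=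
  Submodule.subset_span ⟨z, rfl⟩

lemma tQ_step (N k : ℕ) : tQ p N = (p : ℤ) ^ k • tQ p (N + k) := by
  rw [tQ, tQ, ← Submodule.Quotient.mk_smul]
  congr 1
  rw [zsmul_eq_mul]
  push_cast
  field_simp [hpQ p]
  ring

lemma exists_tQ_rep (c : QpZp p) : ∃ (N : ℕ) (b : ℤ), c = b • tQ p N := by
  obtain ⟨x, rfl⟩ := Submodule.Quotient.mk_surjective (ZpInQp p) c
  obtain ⟨N, hN⟩ : ∃ N : ℕ, ‖x‖ ≤ (p : ℝ) ^ N := by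
    obtain ⟨N, hN⟩ := pow_unbounded_of_one_lt ‖x‖
      (by exact_mod_cast hp.out.one_lt : (1:ℝ) < (p:ℝ))
    exact ⟨N, hN.le⟩
  have hnorm : ‖(p : ℚ_[p]) ^ N * x‖ ≤ 1 := by
    rw [norm_mul, norm_pow, Padic.norm_p]
    have hppos : (0:ℝ) < (p:ℝ) := by exact_mod_cast hp.out.pos
    rw [inv_pow]
    calc ((p:ℝ) ^ N)⁻¹ * ‖x‖ ≤ ((p:ℝ) ^ N)⁻¹ * (p:ℝ) ^ N :=
          mul_le_mul_of_nonneg_left hN (by positivity)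
      _ = 1 := inv_mul_cancel₀ (by positivity)
  set y : ℤ_[p] := ⟨(p : ℚ_[p]) ^ N * x, hnorm⟩ with hy
  obtain ⟨z, hz⟩ : ∃ z : ℤ_[p], y - (y.appr N : ℤ_[p]) = (p : ℤ_[p]) ^ N * z := by
    have := PadicInt.appr_spec N y
    rw [Ideal.mem_span_singleton] at this
    obtain ⟨z, hz⟩ := this
    exact ⟨z, hz⟩
  refine ⟨N, (y.appr N : ℤ), ?_⟩
  rw [tQ, ← Submodule.Quotient.mk_smul]
  rw [Submodule.Quotient.eq]
  have hyx : (y : ℚ_[p]) = (p : ℚ_[p]) ^ N * x := rfl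
  have hzq : (y : ℚ_[p]) - (y.appr N : ℚ_[p]) = (p : ℚ_[p]) ^ N * (z : ℚ_[p]) := by
    have := congrArg ((↑) : ℤ_[p] → ℚ_[p]) hz
    push_cast at this ⊢
    exact_mod_cast this
  have key : x - (y.appr N : ℤ) • ((p : ℚ_[p]) ^ N)⁻¹ = (z : ℚ_[p]) := by
    have hpN : (p : ℚ_[p]) ^ N ≠ 0 := pow_ne_zero _ (hpQ p)
    rw [zsmul_eq_mul]
    field_simp
    have : x * (p : ℚ_[p]) ^ N = (y : ℚ_[p]) := by rw [hyx]; ring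
    rw [this]
    push_cast at hzq ⊢
    linear_combination hzq
  rw [key]
  exact coe_mem_ZpInQp p z

end Padic

end Stmt18Aux

open Stmt18Aux ExteriorAlgebra Finset

set_option maxHeartbeats 4000000 in
/-- Let `Γ ⊆ Γ'` with `Γ' = ℤ^r` free with basis `e₁,…,e_r` and `Γ`
spanned by `d₁e₁,…,d_re_r`, where each `d_i` is `±` a power of `p` and `d_i = ±1` for
all `i > n`. Let `ω ∈ ⋀²Γ ⊗ ℚ_p/ℤ_p` whose image in `⋀²Γ' ⊗ ℚ_p/ℤ_p` is zero. Then `ω`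
lies in `⋀²W ⊗ ℚ_p/ℤ_p` for some subgroup `W ⊆ Γ` of rank at most `2n`. -/
theorem stmt_18 (p : ℕ) [Fact p.Prime] (r n : ℕ)
    (e : Module.Basis (Fin r) ℤ (Fin r → ℤ)) (d : Fin r → ℤ)
    (Γ : Submodule ℤ (Fin r → ℤ))
    (hΓ : Γ = Submodule.span ℤ (Set.range fun i : Fin r => d i • e i))
    (hpow : ∀ i : Fin r, ∃ m : ℕ, d i = (p : ℤ) ^ m ∨ d i = -((p : ℤ) ^ m))
    (hone : ∀ i : Fin r, n ≤ (i : ℕ) → d i = 1 ∨ d i = -1)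
    (ω : ExteriorAlgebra ℤ Γ ⊗[ℤ] QpZp p)
    (hdeg2 : ω ∈ Submodule.span ℤ
      {x : ExteriorAlgebra ℤ Γ ⊗[ℤ] QpZp p | ∃ (u v : Γ) (c : QpZp p),
        x = (ExteriorAlgebra.ι ℤ u * ExteriorAlgebra.ι ℤ v) ⊗ₜ[ℤ] c})
    (h0 : LinearMap.rTensor (QpZp p) (ExteriorAlgebra.map Γ.subtype).toLinearMap ω = 0) :
    ∃ (W : Submodule ℤ (Fin r → ℤ)) (hW : W ≤ Γ),
      Module.finrank ℤ ↥W ≤ 2 * n ∧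
      ω ∈ LinearMap.range (LinearMap.rTensor (QpZp p)
        (ExteriorAlgebra.map (Submodule.inclusion hW)).toLinearMap) := by
  have hdne : ∀ i : Fin r, d i ≠ 0 := by
    intro i
    obtain ⟨m, hm | hm⟩ := hpow i <;> rw [hm] <;>
      simp [pow_ne_zero, (Fact.out : p.Prime).ne_zero]
  have hli : LinearIndependent ℤ (fun i : Fin r => d i • e i) := by
    rw [Fintype.linearIndependent_iff]
    intro c hc i
    have h2 : ∑ j, (c j * d j) • e j = 0 := by
      rw [← hc]
      exact Finset.sum_congr rfl fun j _ => by rw [mul_smul]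
    have := Fintype.linearIndependent_iff.mp e.linearIndependent (fun j => c j * d j) h2 i
    exact (mul_eq_zero.mp this).resolve_right (hdne i)
  subst hΓ
  let g : Module.Basis (Fin r) ℤ (Submodule.span ℤ (Set.range fun i : Fin r => d i • e i)) :=
    Module.Basis.span hli
  have hg : ∀ i, ((g i : Fin r → ℤ)) = d i • e i := fun i => congrArg Subtype.val (Module.Basis.span_apply hli i)
  -- Step 1: write ω in coordinates w.r.t. the basis g
  have hrep : ∀ (x : ExteriorAlgebra ℤ
        (Submodule.span ℤ (Set.range fun i : Fin r => d i • e i)) ⊗[ℤ] QpZp p),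
      x ∈ Submodule.span ℤ
        {x | ∃ (u v : (Submodule.span ℤ (Set.range fun i : Fin r => d i • e i)))
          (c : QpZp p), x = (ι ℤ u * ι ℤ v) ⊗ₜ[ℤ] c} →
      ∃ a : Fin r → Fin r → QpZp p,
        x = ∑ i, ∑ j ∈ Ioi i, (ι ℤ (g i) * ι ℤ (g j)) ⊗ₜ[ℤ] a i j := by
    intro x hx
    refine Submodule.span_induction ?_ ?_ ?_ ?_ hx
    · rintro x ⟨u, v, c, rfl⟩
      refine ⟨fun i j => (g.repr u i * g.repr v j - g.repr u j * g.repr v i) • c, ?_⟩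
      rw [ι_mul_expand g u v, TensorProduct.sum_tmul]
      refine Finset.sum_congr rfl fun i _ => ?_
      rw [TensorProduct.sum_tmul]
      refine Finset.sum_congr rfl fun j _ => ?_
      rw [TensorProduct.smul_tmul]
    · exact ⟨0, by simp⟩
    · rintro x y _ _ ⟨a, ha⟩ ⟨b, hb⟩
      refine ⟨a + b, ?_⟩
      rw [ha, hb, ← Finset.sum_add_distrib]
      refine Finset.sum_congr rfl fun i _ => ?_
      rw [← Finset.sum_add_distrib]
      refine Finset.sum_congr rfl fun j _ => ?_
      rw [← TensorProduct.tmul_add]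
      rfl
    · rintro m x _ ⟨a, ha⟩
      refine ⟨m • a, ?_⟩
      rw [ha, Finset.smul_sum]
      refine Finset.sum_congr rfl fun i _ => ?_
      rw [Finset.smul_sum]
      refine Finset.sum_congr rfl fun j _ => ?_
      simp only [Pi.smul_apply, TensorProduct.tmul_smul]
  obtain ⟨a, ha⟩ := hrep ω hdeg2
  -- Step 2: the image of ω in the exterior algebra of Γ' = ℤ^r
  have himg : LinearMap.rTensor (QpZp p)
      (ExteriorAlgebra.map
        (Submodule.span ℤ (Set.range fun i : Fin r => d i • e i)).subtype).toLinearMap ω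
      = ∑ i, ∑ j ∈ Ioi i, (ι ℤ (d i • e i) * ι ℤ (d j • e j)) ⊗ₜ[ℤ] a i j := by
    rw [ha, map_sum]
    refine Finset.sum_congr rfl fun i _ => ?_
    rw [map_sum]
    refine Finset.sum_congr rfl fun j _ => ?_
    rw [LinearMap.rTensor_tmul]
    congr 1
    rw [AlgHom.toLinearMap_apply, map_mul, map_apply_ι, map_apply_ι,
      Submodule.subtype_apply, Submodule.subtype_apply, hg, hg]
  have hco : ∀ (i q : Fin r), e.coord q (d i • e i) = d i * (if i = q then 1 else 0) := by
    intro i q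
    rw [map_smul, Module.Basis.coord_apply, Module.Basis.repr_self_apply]
    simp [smul_eq_mul]
  have hcoeff : ∀ k l : Fin r, k < l → (d k * d l) • a k l = 0 := by
    intro k l hkl
    set L : ExteriorAlgebra ℤ (Fin r → ℤ) ⊗[ℤ] QpZp p →ₗ[ℤ] QpZp p :=
      (TensorProduct.lid ℤ (QpZp p)).toLinearMap ∘ₗ
        LinearMap.rTensor (QpZp p) (Phi (e.coord k) (e.coord l)) with hL
    have hLt : ∀ (z : ExteriorAlgebra ℤ (Fin r → ℤ)) (c : QpZp p),
        L (z ⊗ₜ[ℤ] c) = (Phi (e.coord k) (e.coord l)) z • c := by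
      intro z c
      rw [hL]
      show (TensorProduct.lid ℤ (QpZp p)) ((LinearMap.rTensor (QpZp p) (Phi (e.coord k) (e.coord l))) (z ⊗ₜ[ℤ] c)) = _
      rw [LinearMap.rTensor_tmul, TensorProduct.lid_tmul]
    have happ : L (∑ i, ∑ j ∈ Ioi i, (ι ℤ (d i • e i) * ι ℤ (d j • e j)) ⊗ₜ[ℤ] a i j) = 0 := by
      rw [← himg, h0, map_zero]
    have hval : (∑ i, ∑ j ∈ Ioi i,
        (Phi (e.coord k) (e.coord l)) (ι ℤ (d i • e i) * ι ℤ (d j • e j)) • a i j)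
        = (d k * d l) • a k l := by
      have step1 : ∀ i : Fin r, ∀ j ∈ Ioi i,
          (Phi (e.coord k) (e.coord l)) (ι ℤ (d i • e i) * ι ℤ (d j • e j)) • a i j
          = if i = k ∧ j = l then (d k * d l) • a k l else 0 := by
        intro i j hij
        have hij' : i < j := mem_Ioi.mp hij
        rw [Phi_ι_mul, hco, hco, hco, hco]
        by_cases h1 : i = k
        · by_cases h2 : j = l
          · subst h1; subst h2
            simp [hkl.ne, hkl.ne']
          · have hjk : j ≠ k := by rw [← h1]; exact hij'.ne'
            simp [h1, h2, hjk, hkl.ne]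
        · by_cases h3 : j = k
          · have hil : i ≠ l := by
              subst h3
              exact (hij'.trans hkl).ne
            simp [h1, h3, hil]
          · simp [h1, h3]
      calc (∑ i, ∑ j ∈ Ioi i, (Phi (e.coord k) (e.coord l))
              (ι ℤ (d i • e i) * ι ℤ (d j • e j)) • a i j)
          = ∑ i : Fin r, ∑ j ∈ Ioi i, (if i = k ∧ j = l then (d k * d l) • a k l else 0) :=
            Finset.sum_congr rfl fun i _ => Finset.sum_congr rfl fun j hj => step1 i j hj
        _ = ∑ i : Fin r, (if i = k then (if l ∈ Ioi i then (d k * d l) • a k l else 0) else 0) := by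
            refine Finset.sum_congr rfl fun i _ => ?_
            by_cases h : i = k
            · simp only [h, true_and]
              exact Finset.sum_ite_eq' (Ioi k) l (fun _ => (d k * d l) • a k l)
            · simp [h]
        _ = (d k * d l) • a k l := by
            rw [Finset.sum_ite_eq' univ k
              (fun i => if l ∈ Ioi i then (d k * d l) • a k l else 0)]
            simp [mem_Ioi, hkl]
    have hLsum : L (∑ i, ∑ j ∈ Ioi i, (ι ℤ (d i • e i) * ι ℤ (d j • e j)) ⊗ₜ[ℤ] a i j)
        = ∑ i, ∑ j ∈ Ioi i,
          (Phi (e.coord k) (e.coord l)) (ι ℤ (d i • e i) * ι ℤ (d j • e j)) • a i j := by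
      rw [map_sum]
      refine Finset.sum_congr rfl fun i _ => ?_
      rw [map_sum]
      exact Finset.sum_congr rfl fun j _ => hLt _ _
    rw [hLsum, hval] at happ
    exact happ
  -- Step 3: coefficients with large indices vanish
  have hvanish : ∀ k l : Fin r, k < l → n ≤ (k : ℕ) → a k l = 0 := by
    intro k l hkl hnk
    have hnl : n ≤ (l : ℕ) := hnk.trans (Nat.le_of_lt (Fin.lt_def.mp hkl))
    have h := hcoeff k l hkl
    rcases hone k hnk with h1 | h1 <;> rcases hone l hnl with h2 | h2 <;>
      rw [h1, h2] at h <;> simpa using h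
  -- Step 4: uniform denominators
  have hchoice : ∀ i j : Fin r, ∃ (N : ℕ) (b : ℤ), a i j = b • tQ p N :=
    fun i j => exists_tQ_rep p (a i j)
  choose Nf bf hNb using hchoice
  set N : ℕ := Finset.univ.sup (fun ij : Fin r × Fin r => Nf ij.1 ij.2) with hNdef
  have hbN : ∀ i j : Fin r, ∃ c : ℤ, a i j = c • tQ p N := by
    intro i j
    have hle : Nf i j ≤ N := Finset.le_sup (f := fun ij : Fin r × Fin r => Nf ij.1 ij.2)
      (Finset.mem_univ (i, j))
    refine ⟨bf i j * (p : ℤ) ^ (N - Nf i j), ?_⟩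
    rw [hNb i j, tQ_step p (Nf i j) (N - Nf i j), smul_smul]
    congr 2
    omega
  choose b hb using hbN
  -- Step 5: the subspace W
  set S : Finset (Fin r) := Finset.univ.filter (fun i => (i : ℕ) < n) with hSdef
  set f : Fin r → (Fin r → ℤ) := fun i => ∑ j ∈ Ioi i, b i j • ((g j : Fin r → ℤ)) with hfdef
  set W : Submodule ℤ (Fin r → ℤ) :=
    Submodule.span ℤ
      (↑((S.image fun i => ((g i : Fin r → ℤ))) ∪ S.image f) : Set (Fin r → ℤ)) with hWdef
  have hWΓ : W ≤ Submodule.span ℤ (Set.range fun i : Fin r => d i • e i) := by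
    rw [hWdef, Submodule.span_le]
    intro x hx
    simp only [Finset.coe_union, Set.mem_union, Finset.coe_image, Set.mem_image] at hx
    rcases hx with ⟨i, _, rfl⟩ | ⟨i, _, rfl⟩
    · exact (g i).2
    · exact Submodule.sum_mem _ fun j _ => Submodule.smul_mem _ _ (g j).2
  refine ⟨W, hWΓ, ?_, ?_⟩
  · -- rank bound
    have hS_card : S.card ≤ n := by
      have := Finset.card_le_card_of_injOn (s := S) (t := Finset.range n)
        (fun i : Fin r => (i : ℕ))
        (fun x hx => Finset.mem_range.mpr (by simpa [hSdef] using (Finset.mem_filter.mp hx).2))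
        (fun x _ y _ h => Fin.val_injective h)
      simpa using this
    have hcard : ((S.image fun i => ((g i : Fin r → ℤ))) ∪ S.image f).card ≤ 2 * n := by
      calc ((S.image fun i => ((g i : Fin r → ℤ))) ∪ S.image f).card
          ≤ (S.image fun i => ((g i : Fin r → ℤ))).card + (S.image f).card :=
            Finset.card_union_le _ _
        _ ≤ S.card + S.card := add_le_add Finset.card_image_le Finset.card_image_le
        _ ≤ 2 * n := by omega
    rw [hWdef]
    exact le_trans (finrank_span_finset_le_card _) hcard
  · -- ω lies in the image of ⋀W ⊗ ℚ_p/ℤ_p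
    have hωfinal : ω = ∑ i ∈ S,
        (ι ℤ (g i) * ι ℤ (∑ j ∈ Ioi i, b i j • g j)) ⊗ₜ[ℤ] tQ p N := by
      rw [ha]
      have hzero : ∀ i ∈ (univ : Finset (Fin r)), i ∉ S →
          (∑ j ∈ Ioi i, (ι ℤ (g i) * ι ℤ (g j)) ⊗ₜ[ℤ] a i j) = 0 := by
        intro i _ hiS
        have hni : n ≤ (i : ℕ) := by
          simp only [hSdef, Finset.mem_filter, Finset.mem_univ, true_and] at hiS
          omega
        refine Finset.sum_eq_zero fun j hj => ?_
        rw [hvanish i j (mem_Ioi.mp hj) hni, TensorProduct.tmul_zero]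
      rw [← Finset.sum_subset (Finset.subset_univ S) hzero]
      refine Finset.sum_congr rfl fun i hi => ?_
      have hιsum : ι ℤ (∑ j ∈ Ioi i, b i j • g j) = ∑ j ∈ Ioi i, b i j • ι ℤ (g j) := by
        rw [map_sum]; simp only [map_smul]
      rw [hιsum, Finset.mul_sum, TensorProduct.sum_tmul]
      refine Finset.sum_congr rfl fun j hj => ?_
      rw [hb i j, TensorProduct.tmul_smul, TensorProduct.smul_tmul', ← mul_smul_comm]
    rw [hωfinal]
    refine Submodule.sum_mem _ fun i hi => ?_
    have hgiW : ((g i : Fin r → ℤ)) ∈ W := by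
      rw [hWdef]
      refine Submodule.subset_span ?_
      simp only [Finset.coe_union, Set.mem_union, Finset.coe_image, Set.mem_image]
      exact Or.inl ⟨i, hi, rfl⟩
    have hfiW : f i ∈ W := by
      rw [hWdef]
      refine Submodule.subset_span ?_
      simp only [Finset.coe_union, Set.mem_union, Finset.coe_image, Set.mem_image]
      exact Or.inr ⟨i, hi, rfl⟩
    refine LinearMap.mem_range.mpr
      ⟨(ι ℤ (⟨(g i : Fin r → ℤ), hgiW⟩ : W) * ι ℤ (⟨f i, hfiW⟩ : W)) ⊗ₜ[ℤ] tQ p N, ?_⟩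
    rw [LinearMap.rTensor_tmul]
    congr 1
    rw [AlgHom.toLinearMap_apply, map_mul, map_apply_ι, map_apply_ι]
    have e1 : Submodule.inclusion hWΓ (⟨(g i : Fin r → ℤ), hgiW⟩ : W) = g i :=
      Subtype.ext rfl
    have e2 : Submodule.inclusion hWΓ (⟨f i, hfiW⟩ : W) = ∑ j ∈ Ioi i, b i j • g j := by
      refine Subtype.ext ?_
      show f i = _
      rw [hfdef]
      simp only [AddSubmonoidClass.coe_finset_sum, SetLike.val_smul]
    rw [e1, e2]
end
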